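/- Let H be a cocommutative Hopf algebra over a commutative ring K containing the rationals, and define h▹h' := ad_h(h') = Σ h⁽¹⁾h'S(h⁽²⁾). Then (H,Δ,ε,1,▹) is a rack bialgebra: the map h⊗h' ↦ h▹h' is a morphism of C³-coalgebras H⊗H → H, and for all h,h',h'' ∈ H one has 1▹h = h, h▹1 = ε(h)1, and h▹(h'▹h'') = Σ (h⁽¹⁾▹h')▹(h⁽²⁾▹h''). -/

import Mathlib

open TensorProduct

namespace RackPaper

variable (K : Type*) [CommRing K]
variable (B : Type*) [AddCommGroup B] [Module K B]

/-- The comultiplication of the tensor-product coalgebra `B ⊗ B`, built from a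
comultiplication on `B`:  `a ⊗ b ↦ Σ (a⁽¹⁾ ⊗ b⁽¹⁾) ⊗ (a⁽²⁾ ⊗ b⁽²⁾)`. -/
noncomputable def comul2 (comul : B →ₗ[K] B ⊗[K] B) :
    B ⊗[K] B →ₗ[K] (B ⊗[K] B) ⊗[K] (B ⊗[K] B) :=
  (tensorTensorTensorComm K B B B B).toLinearMap ∘ₗ TensorProduct.map comul comul

/-- The counit of the tensor-product coalgebra `B ⊗ B`. -/
noncomputable def counit2 (counit : B →ₗ[K] K) : B ⊗[K] B →ₗ[K] K :=
  (LinearMap.mul' K K) ∘ₗ TensorProduct.map counit counit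

/-- `(B, comul, counit, one)` is a coassociative counital coaugmented coalgebra
(a C³-coalgebra). -/
structure IsC3Coalgebra (comul : B →ₗ[K] B ⊗[K] B) (counit : B →ₗ[K] K) (one : B) : Prop where
  coassoc : (TensorProduct.assoc K B B B).toLinearMap ∘ₗ
      (TensorProduct.map comul LinearMap.id) ∘ₗ comul
      = (TensorProduct.map LinearMap.id comul) ∘ₗ comul
  counit_comul : (TensorProduct.lid K B).toLinearMap ∘ₗ
      (TensorProduct.map counit LinearMap.id) ∘ₗ comul = LinearMap.id
  comul_counit : (TensorProduct.rid K B).toLinearMap ∘ₗ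
      (TensorProduct.map LinearMap.id counit) ∘ₗ comul = LinearMap.id
  comul_one : comul one = one ⊗ₜ[K] one
  counit_one : counit one = 1

/-- A rack bialgebra structure on the C³-coalgebra `(B, comul, counit, one)`:
the multiplication `μ` (written `a ▹ b`) is a morphism of C³-coalgebras,
`1 ▹ a = a`, `a ▹ 1 = ε(a) 1`, and the self-distributivity identity
`a ▹ (b ▹ c) = Σ (a⁽¹⁾ ▹ b) ▹ (a⁽²⁾ ▹ c)` holds. -/
structure IsRackBialgebra (comul : B →ₗ[K] B ⊗[K] B) (counit : B →ₗ[K] K) (one : B)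
    (mul : B ⊗[K] B →ₗ[K] B) : Prop where
  isC3 : IsC3Coalgebra K B comul counit one
  comul_mul : comul ∘ₗ mul = (TensorProduct.map mul mul) ∘ₗ comul2 K B comul
  counit_mul : counit ∘ₗ mul = counit2 K B counit
  one_mul : ∀ a : B, mul (one ⊗ₜ[K] a) = a
  mul_one : ∀ a : B, mul (a ⊗ₜ[K] one) = counit a • one
  self_distrib : mul ∘ₗ TensorProduct.map LinearMap.id mul
      = mul ∘ₗ TensorProduct.map mul mul ∘ₗ
          (tensorTensorTensorComm K B B B B).toLinearMap ∘ₗ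
          TensorProduct.map comul LinearMap.id

/-- The adjoint representation of a Hopf algebra, as a linear map on the tensor square:
`h ⊗ h' ↦ ad_h(h') = Σ h⁽¹⁾ h' S(h⁽²⁾)`. -/
noncomputable def adjointMap (H : Type*) [Ring H] [HopfAlgebra K H] :
    H ⊗[K] H →ₗ[K] H :=
  (LinearMap.mul' K H) ∘ₗ
  (TensorProduct.map LinearMap.id (LinearMap.mul' K H)) ∘ₗ
  (TensorProduct.map LinearMap.id
      (TensorProduct.map LinearMap.id (HopfAlgebra.antipode (R := K)))) ∘ₗ
  (TensorProduct.map LinearMap.id (TensorProduct.comm K H H).toLinearMap) ∘ₗ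
  (TensorProduct.assoc K H H H).toLinearMap ∘ₗ
  (TensorProduct.map (Coalgebra.comul) LinearMap.id)

section ReprShim
universe uR uA uI
variable {R : Type uR} [CommSemiring R] {A : Type uA} [AddCommMonoid A] [Module R A]
  [CoalgebraStruct R A]

/-- A representation of `comul a` as a finite sum of pure tensors (index type as a field). -/
structure Repr (R : Type uR) [CommSemiring R] {A : Type uA} [AddCommMonoid A] [Module R A]
    [CoalgebraStruct R A] (a : A) where
  ι : Type uI
  index : Finset ι
  left : ι → A
  right : ι → A
  eq : ∑ i ∈ index, left i ⊗ₜ[R] right i = CoalgebraStruct.comul a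

/-- An arbitrarily chosen representation. -/
noncomputable def Repr.arbitrary (R : Type uR) [CommSemiring R] {A : Type uA} [AddCommMonoid A]
    [Module R A] [CoalgebraStruct R A] (a : A) : Repr.{uR, uA, uA} R a where
  ι := A × A
  index := (Coalgebra.Repr.arbitrary R a).index
  left := Prod.fst
  right := Prod.snd
  eq := (Coalgebra.Repr.arbitrary R a).eq

/-- The corresponding Mathlib representation. -/
def Repr.toC {a : A} (r : Repr R a) : Coalgebra.Repr R a r.ι :=
  ⟨r.index, r.left, r.right, r.eq⟩

end ReprShim

section ReprShim2
variable {R : Type*} [CommRing R] {A : Type*} [Ring A]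

lemma sum_counit_tmul_eq [AddCommGroup A] [Module R A] [Coalgebra R A] {a : A} (r : Repr R a) :
    ∑ i ∈ r.index, Coalgebra.counit (R := R) (r.left i) ⊗ₜ[R] r.right i = (1 : R) ⊗ₜ[R] a :=
  Coalgebra.sum_counit_tmul_eq r.toC

lemma sum_tmul_counit_eq [AddCommGroup A] [Module R A] [Coalgebra R A] {a : A} (r : Repr R a) :
    ∑ i ∈ r.index, r.left i ⊗ₜ[R] Coalgebra.counit (R := R) (r.right i) = a ⊗ₜ[R] (1 : R) :=
  Coalgebra.sum_tmul_counit_eq r.toC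

lemma sum_antipode_mul_eq [HopfAlgebra R A] {a : A} (r : Repr R a) :
    ∑ i ∈ r.index, HopfAlgebra.antipode R (r.left i) * r.right i =
      algebraMap R A (Coalgebra.counit (R := R) a) :=
  HopfAlgebra.sum_antipode_mul_eq_algebraMap_counit r.toC

lemma sum_mul_antipode_eq_smul [HopfAlgebra R A] {a : A} (r : Repr R a) :
    ∑ i ∈ r.index, r.left i * HopfAlgebra.antipode R (r.right i) =
      Coalgebra.counit (R := R) a • (1 : A) :=
  HopfAlgebra.sum_mul_antipode_eq_smul r.toC

end ReprShim2

section Aux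
variable {K : Type*} [CommRing K] {H : Type*} [Ring H] [HopfAlgebra K H]

open Coalgebra HopfAlgebra LinearMap

/-- The "conjugation" map `(p ⊗ q) ⊗ y ↦ p * y * S q`. -/
noncomputable def ad2 : (H ⊗[K] H) ⊗[K] H →ₗ[K] H :=
  (LinearMap.mul' K H) ∘ₗ
  (TensorProduct.map LinearMap.id (LinearMap.mul' K H)) ∘ₗ
  (TensorProduct.map LinearMap.id
      (TensorProduct.map LinearMap.id (HopfAlgebra.antipode (R := K)))) ∘ₗ
  (TensorProduct.map LinearMap.id (TensorProduct.comm K H H).toLinearMap) ∘ₗ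
  (TensorProduct.assoc K H H H).toLinearMap

@[simp] lemma ad2_tmul (p q y : H) :
    ad2 (K := K) ((p ⊗ₜ[K] q) ⊗ₜ[K] y) = p * y * antipode (R := K) q := by
  simp [ad2, mul_assoc]

lemma adjointMap_eq :
    adjointMap K H = ad2 ∘ₗ TensorProduct.map (Coalgebra.comul) LinearMap.id := by
  rfl

lemma adjointMap_tmul (a x : H) (r : Repr K a) :
    adjointMap K H (a ⊗ₜ[K] x)
      = ∑ i ∈ r.index, r.left i * x * antipode (R := K) (r.right i) := by
  rw [adjointMap_eq]
  simp only [LinearMap.comp_apply, TensorProduct.map_tmul, LinearMap.id_apply, ← r.eq]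
  rw [TensorProduct.sum_tmul]
  simp

@[simp] lemma antipode_one' : antipode (R := K) (1 : H) = 1 := by
  have := mul_antipode_rTensor_comul_apply (R := K) (a := (1 : H))
  simpa [Bialgebra.comul_one, Algebra.TensorProduct.one_def] using this

lemma sum_counit_smul_right {a : H} (r : Repr K a) :
    ∑ i ∈ r.index, counit (R := K) (r.right i) • r.left i = a := by
  have := congrArg (TensorProduct.rid K H) (sum_tmul_counit_eq (R := K) r)
  simp only [map_sum, TensorProduct.rid_tmul] at this
  simpa using this

lemma sum_counit_smul_left {a : H} (r : Repr K a) :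
    ∑ i ∈ r.index, counit (R := K) (r.left i) • r.right i = a := by
  have := congrArg (TensorProduct.lid K H) (sum_counit_tmul_eq (R := K) r)
  simp only [map_sum, TensorProduct.lid_tmul] at this
  simpa using this

lemma counit_antipode (a : H) :
    counit (R := K) (antipode (R := K) a) = counit (R := K) a := by
  obtain ⟨r⟩ : Nonempty (Repr K a) := ⟨Repr.arbitrary K a⟩
  have h1 := congrArg (counit (R := K)) (sum_antipode_mul_eq (R := K) r)
  have h2 : ∑ i ∈ r.index, counit (R := K) (antipode (R := K) (r.left i)) *
      counit (R := K) (r.right i) = counit (R := K) a := by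
    rw [map_sum] at h1
    simp only [Bialgebra.counit_mul] at h1
    rw [h1, Bialgebra.counit_algebraMap]
  calc counit (R := K) (antipode (R := K) a)
      = counit (R := K) (antipode (R := K)
          (∑ i ∈ r.index, counit (R := K) (r.right i) • r.left i)) := by
        rw [sum_counit_smul_right]
    _ = counit (R := K) a := by
        rw [map_sum, map_sum]
        rw [← h2]
        congr 1; ext i
        simp [mul_comm]

/-- Product of two representations: a representation of `a * b`. -/
noncomputable def Repr.mul {a b : H} (ra : Repr K a) (rb : Repr K b) : Repr K (a * b) where
  ι := ra.ι × rb.ι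
  index := ra.index ×ˢ rb.index
  left := fun p => ra.left p.1 * rb.left p.2
  right := fun p => ra.right p.1 * rb.right p.2
  eq := by
    rw [Bialgebra.comul_mul, ← ra.eq, ← rb.eq, Finset.sum_mul_sum]
    rw [Finset.sum_product]
    simp [Algebra.TensorProduct.tmul_mul_tmul]


@[simp] lemma Repr.mul_index {a b : H} (ra : Repr K a) (rb : Repr K b) :
    (Repr.mul ra rb).index = ra.index ×ˢ rb.index := rfl

@[simp] lemma Repr.mul_left {a b : H} (ra : Repr K a) (rb : Repr K b) (p : ra.ι × rb.ι) :
    (Repr.mul ra rb).left p = ra.left p.1 * rb.left p.2 := rfl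

@[simp] lemma Repr.mul_right {a b : H} (ra : Repr K a) (rb : Repr K b) (p : ra.ι × rb.ι) :
    (Repr.mul ra rb).right p = ra.right p.1 * rb.right p.2 := rfl

end Aux

section CC
variable (K : Type*) [CommRing K] (H : Type*) [Ring H] [HopfAlgebra K H]
open Coalgebra HopfAlgebra LinearMap

/-- swap of the first two legs of a right-nested triple tensor. -/
noncomputable def sw12 : H ⊗[K] (H ⊗[K] H) →ₗ[K] H ⊗[K] (H ⊗[K] H) :=
  (TensorProduct.assoc K H H H).toLinearMap ∘ₗ
  ((TensorProduct.comm K H H).toLinearMap.rTensor H) ∘ₗ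
  (TensorProduct.assoc K H H H).symm.toLinearMap

@[simp] lemma sw12_tmul (x y z : H) :
    sw12 K H (x ⊗ₜ[K] (y ⊗ₜ[K] z)) = y ⊗ₜ[K] (x ⊗ₜ[K] z) := by
  simp [sw12]

variable {K H}

lemma cocomm_map (hc : ∀ h : H,
      (TensorProduct.comm K H H) (Coalgebra.comul h) = Coalgebra.comul (R := K) h) :
    (TensorProduct.comm K H H).toLinearMap ∘ₗ Coalgebra.comul
      = (Coalgebra.comul (R := K) (A := H)) :=
  LinearMap.ext hc

/-- swap of legs 1,2 of the right-nested double comultiplication. -/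
lemma W11 (hc : ∀ h : H,
      (TensorProduct.comm K H H) (Coalgebra.comul h) = Coalgebra.comul (R := K) h) :
    (sw12 K H) ∘ₗ ((Coalgebra.comul (R := K) (A := H)).lTensor H ∘ₗ Coalgebra.comul)
    = (Coalgebra.comul (R := K) (A := H)).lTensor H ∘ₗ Coalgebra.comul := by
  have hco := Coalgebra.coassoc (R := K) (A := H)
  have e1 : (sw12 K H) ∘ₗ (TensorProduct.assoc K H H H).toLinearMap
      = (TensorProduct.assoc K H H H).toLinearMap ∘ₗ
        ((TensorProduct.comm K H H).toLinearMap.rTensor H) := by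
    ext x y z
    simp [sw12]
  calc (sw12 K H) ∘ₗ ((Coalgebra.comul (R := K)).lTensor H ∘ₗ Coalgebra.comul)
      = (sw12 K H) ∘ₗ ((TensorProduct.assoc K H H H).toLinearMap ∘ₗ
          (Coalgebra.comul (R := K)).rTensor H ∘ₗ Coalgebra.comul) := by rw [hco]
    _ = ((sw12 K H) ∘ₗ (TensorProduct.assoc K H H H).toLinearMap) ∘ₗ
          (Coalgebra.comul (R := K)).rTensor H ∘ₗ Coalgebra.comul := by
        simp only [LinearMap.comp_assoc]
    _ = (TensorProduct.assoc K H H H).toLinearMap ∘ₗ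
          (((TensorProduct.comm K H H).toLinearMap.rTensor H) ∘ₗ
            (Coalgebra.comul (R := K)).rTensor H) ∘ₗ Coalgebra.comul := by
        rw [e1]; simp only [LinearMap.comp_assoc]
    _ = (TensorProduct.assoc K H H H).toLinearMap ∘ₗ
          ((Coalgebra.comul (R := K)).rTensor H) ∘ₗ Coalgebra.comul := by
        rw [← LinearMap.rTensor_comp, cocomm_map hc]
    _ = (Coalgebra.comul (R := K)).lTensor H ∘ₗ Coalgebra.comul := hco

/-- middle-two-legs exchange invariance of the double comultiplication. -/
lemma W10 (hc : ∀ h : H,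
      (TensorProduct.comm K H H) (Coalgebra.comul h) = Coalgebra.comul (R := K) h) :
    (tensorTensorTensorComm K H H H H).toLinearMap ∘ₗ
      (TensorProduct.map (Coalgebra.comul) (Coalgebra.comul) ∘ₗ (Coalgebra.comul (R := K) (A := H)))
    = TensorProduct.map (Coalgebra.comul) (Coalgebra.comul) ∘ₗ (Coalgebra.comul (R := K) (A := H)) := by
  have hco := Coalgebra.coassoc (R := K) (A := H)
  set Δ := Coalgebra.comul (R := K) (A := H) with hΔ
  set AB := (TensorProduct.assoc K H H (H ⊗[K] H)) with hAB
  have e5 : ((Δ.lTensor H).lTensor H) ∘ₗ (TensorProduct.assoc K H H H).toLinearMap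
      = AB.toLinearMap ∘ₗ (Δ.lTensor (H ⊗[K] H)) := by
    ext x y z
    simp [hAB]
  have claim1AB : AB.toLinearMap ∘ₗ (TensorProduct.map Δ Δ ∘ₗ Δ)
      = (Δ.lTensor H ∘ₗ Δ).lTensor H ∘ₗ Δ := by
    calc AB.toLinearMap ∘ₗ (TensorProduct.map Δ Δ ∘ₗ Δ)
        = AB.toLinearMap ∘ₗ ((Δ.lTensor (H ⊗[K] H) ∘ₗ Δ.rTensor H) ∘ₗ Δ) := by
          rw [LinearMap.lTensor_comp_rTensor]
      _ = (AB.toLinearMap ∘ₗ Δ.lTensor (H ⊗[K] H)) ∘ₗ (Δ.rTensor H ∘ₗ Δ) := by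
          simp only [LinearMap.comp_assoc]
      _ = (((Δ.lTensor H).lTensor H) ∘ₗ (TensorProduct.assoc K H H H).toLinearMap) ∘ₗ
            (Δ.rTensor H ∘ₗ Δ) := by rw [e5]
      _ = ((Δ.lTensor H).lTensor H) ∘ₗ ((TensorProduct.assoc K H H H).toLinearMap ∘ₗ
            Δ.rTensor H ∘ₗ Δ) := by simp only [LinearMap.comp_assoc]
      _ = ((Δ.lTensor H).lTensor H) ∘ₗ (Δ.lTensor H ∘ₗ Δ) := by rw [hco]
      _ = (Δ.lTensor H ∘ₗ Δ).lTensor H ∘ₗ Δ := by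
          rw [LinearMap.lTensor_comp]; simp only [LinearMap.comp_assoc]
  have claim1 : TensorProduct.map Δ Δ ∘ₗ Δ
      = AB.symm.toLinearMap ∘ₗ ((Δ.lTensor H ∘ₗ Δ).lTensor H ∘ₗ Δ) :=
    (LinearEquiv.eq_toLinearMap_symm_comp _ _).mpr claim1AB
  have e2 : (tensorTensorTensorComm K H H H H).toLinearMap ∘ₗ AB.symm.toLinearMap
      = AB.symm.toLinearMap ∘ₗ ((sw12 K H).lTensor H) := by
    ext x y z w
    simp [hAB]
  calc (tensorTensorTensorComm K H H H H).toLinearMap ∘ₗ (TensorProduct.map Δ Δ ∘ₗ Δ)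
      = (tensorTensorTensorComm K H H H H).toLinearMap ∘ₗ
          (AB.symm.toLinearMap ∘ₗ ((Δ.lTensor H ∘ₗ Δ).lTensor H ∘ₗ Δ)) := by rw [claim1]
    _ = ((tensorTensorTensorComm K H H H H).toLinearMap ∘ₗ AB.symm.toLinearMap) ∘ₗ
          ((Δ.lTensor H ∘ₗ Δ).lTensor H ∘ₗ Δ) := by simp only [LinearMap.comp_assoc]
    _ = (AB.symm.toLinearMap ∘ₗ ((sw12 K H).lTensor H)) ∘ₗ
          ((Δ.lTensor H ∘ₗ Δ).lTensor H ∘ₗ Δ) := by rw [e2]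
    _ = AB.symm.toLinearMap ∘ₗ
          ((((sw12 K H).lTensor H) ∘ₗ (Δ.lTensor H ∘ₗ Δ).lTensor H) ∘ₗ Δ) := by
        simp only [LinearMap.comp_assoc]
    _ = AB.symm.toLinearMap ∘ₗ
          (((sw12 K H) ∘ₗ (Δ.lTensor H ∘ₗ Δ)).lTensor H ∘ₗ Δ) := by
        rw [← LinearMap.lTensor_comp]
    _ = AB.symm.toLinearMap ∘ₗ ((Δ.lTensor H ∘ₗ Δ).lTensor H ∘ₗ Δ) := by
        rw [W11 hc]
    _ = TensorProduct.map Δ Δ ∘ₗ Δ := claim1.symm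

end CC

section Gen
variable {K : Type*} [CommRing K] {H : Type*} [Ring H] [HopfAlgebra K H]
open Coalgebra HopfAlgebra LinearMap

lemma sum_counit_mul_counit {a : H} (r : Repr K a) :
    ∑ i ∈ r.index, counit (R := K) (r.left i) * counit (R := K) (r.right i)
      = counit (R := K) a := by
  have := congrArg (counit (R := K)) (sum_counit_smul_left (K := K) r)
  simpa [map_sum, smul_eq_mul] using this

/-- Contraction of the first two of three Sweedler legs (needs coassociativity). -/
lemma W5gen {A : Type*} [Ring A] [Algebra K A] (φ ψ : H →ₗ[K] A)
    (hconv : LinearMap.mul' K A ∘ₗ TensorProduct.map φ ψ ∘ₗ Coalgebra.comul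
      = Algebra.linearMap K A ∘ₗ (Coalgebra.counit (R := K) (A := H)))
    {a : H} (ra : Repr K a) (rr : ∀ i : ra.ι, Repr K (ra.right i)) :
    ∑ i ∈ ra.index, ∑ k ∈ (rr i).index,
        (φ (ra.left i) * ψ ((rr i).left k)) ⊗ₜ[K] (rr i).right k
      = (1 : A) ⊗ₜ[K] a := by
  set Φ : H ⊗[K] (H ⊗[K] H) →ₗ[K] A ⊗[K] H :=
    ((LinearMap.mul' K A ∘ₗ TensorProduct.map φ ψ).rTensor H) ∘ₗ
      (TensorProduct.assoc K H H H).symm.toLinearMap with hΦ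
  have step1 : ∑ i ∈ ra.index, ∑ k ∈ (rr i).index,
      (φ (ra.left i) * ψ ((rr i).left k)) ⊗ₜ[K] (rr i).right k
      = Φ (((Coalgebra.comul (R := K)).lTensor H) (Coalgebra.comul a)) := by
    rw [← ra.eq, map_sum, map_sum]
    refine Finset.sum_congr rfl fun i _ => ?_
    rw [LinearMap.lTensor_tmul, ← (rr i).eq, TensorProduct.tmul_sum, map_sum]
    refine Finset.sum_congr rfl fun k _ => ?_
    simp [hΦ]
  rw [step1, ← Coalgebra.coassoc_apply (R := K) a]
  have step2 : ∀ e : (H ⊗[K] H) ⊗[K] H,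
      Φ ((TensorProduct.assoc K H H H) e)
        = ((LinearMap.mul' K A ∘ₗ TensorProduct.map φ ψ).rTensor H) e := by
    intro e
    simp [hΦ]
  rw [step2, ← LinearMap.comp_apply, ← LinearMap.rTensor_comp]
  have step3 : (LinearMap.mul' K A ∘ₗ TensorProduct.map φ ψ) ∘ₗ
        (Coalgebra.comul (R := K) (A := H))
      = Algebra.linearMap K A ∘ₗ Coalgebra.counit := by
    rw [← hconv]; simp only [LinearMap.comp_assoc]
  rw [step3, ← ra.eq, map_sum]
  have step4 : ∀ i : ra.ι,
      ((Algebra.linearMap K A ∘ₗ Coalgebra.counit).rTensor H) (ra.left i ⊗ₜ[K] ra.right i)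
        = (1 : A) ⊗ₜ[K] (counit (R := K) (ra.left i) • ra.right i) := by
    intro i
    simp [Algebra.algebraMap_eq_smul_one, TensorProduct.smul_tmul']
  rw [Finset.sum_congr rfl fun i _ => step4 i, ← TensorProduct.tmul_sum,
    sum_counit_smul_left]

/-- Contraction of the last two of three Sweedler legs (right-nested version). -/
lemma W6gen {A : Type*} [Ring A] [Algebra K A] (φ ψ : H →ₗ[K] A)
    (hconv : LinearMap.mul' K A ∘ₗ TensorProduct.map φ ψ ∘ₗ Coalgebra.comul
      = Algebra.linearMap K A ∘ₗ (Coalgebra.counit (R := K) (A := H)))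
    {a : H} (ra : Repr K a) (rr : ∀ i : ra.ι, Repr K (ra.right i)) :
    ∑ i ∈ ra.index, ∑ k ∈ (rr i).index,
        ra.left i ⊗ₜ[K] (φ ((rr i).left k) * ψ ((rr i).right k))
      = a ⊗ₜ[K] (1 : A) := by
  have inner : ∀ i : ra.ι, ∑ k ∈ (rr i).index, φ ((rr i).left k) * ψ ((rr i).right k)
      = counit (R := K) (ra.right i) • (1 : A) := by
    intro i
    have h1 := congrArg (LinearMap.mul' K A ∘ₗ TensorProduct.map φ ψ) ((rr i).eq)
    have h2 := LinearMap.congr_fun hconv (ra.right i)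
    simp only [LinearMap.comp_apply] at h1 h2
    rw [map_sum, map_sum] at h1
    simp only [TensorProduct.map_tmul, LinearMap.mul'_apply] at h1
    rw [h1, h2]
    simp [Algebra.algebraMap_eq_smul_one]
  calc ∑ i ∈ ra.index, ∑ k ∈ (rr i).index,
        ra.left i ⊗ₜ[K] (φ ((rr i).left k) * ψ ((rr i).right k))
      = ∑ i ∈ ra.index, ra.left i ⊗ₜ[K]
          (∑ k ∈ (rr i).index, φ ((rr i).left k) * ψ ((rr i).right k)) := by
        refine Finset.sum_congr rfl fun i _ => ?_
        rw [TensorProduct.tmul_sum]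
    _ = ∑ i ∈ ra.index, (counit (R := K) (ra.right i) • ra.left i) ⊗ₜ[K] (1 : A) := by
        refine Finset.sum_congr rfl fun i _ => ?_
        rw [inner i, TensorProduct.tmul_smul, TensorProduct.smul_tmul']
    _ = a ⊗ₜ[K] (1 : A) := by
        rw [← TensorProduct.sum_tmul, sum_counit_smul_right]

/-- Contraction of legs two and three in the left-nested convention. -/
lemma W7gen {A : Type*} [Ring A] [Algebra K A] (φ ψ : H →ₗ[K] A)
    (hconv : LinearMap.mul' K A ∘ₗ TensorProduct.map φ ψ ∘ₗ Coalgebra.comul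
      = Algebra.linearMap K A ∘ₗ (Coalgebra.counit (R := K) (A := H)))
    {a : H} (ra : Repr K a) (rl : ∀ i : ra.ι, Repr K (ra.left i)) :
    ∑ i ∈ ra.index, ∑ k ∈ (rl i).index,
        (rl i).left k ⊗ₜ[K] (φ ((rl i).right k) * ψ (ra.right i))
      = a ⊗ₜ[K] (1 : A) := by
  set Ψ : H ⊗[K] (H ⊗[K] H) →ₗ[K] H ⊗[K] A :=
    (LinearMap.mul' K A ∘ₗ TensorProduct.map φ ψ).lTensor H with hΨ
  have step1 : ∑ i ∈ ra.index, ∑ k ∈ (rl i).index,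
      (rl i).left k ⊗ₜ[K] (φ ((rl i).right k) * ψ (ra.right i))
      = Ψ ((TensorProduct.assoc K H H H)
          (((Coalgebra.comul (R := K)).rTensor H) (Coalgebra.comul a))) := by
    rw [← ra.eq, map_sum, map_sum, map_sum]
    refine Finset.sum_congr rfl fun i _ => ?_
    rw [LinearMap.rTensor_tmul, ← (rl i).eq, TensorProduct.sum_tmul, map_sum, map_sum]
    refine Finset.sum_congr rfl fun k _ => ?_
    simp [hΨ]
  rw [step1, Coalgebra.coassoc_apply (R := K) a, ← LinearMap.comp_apply, hΨ,
    ← LinearMap.lTensor_comp]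
  have step3 : (LinearMap.mul' K A ∘ₗ TensorProduct.map φ ψ) ∘ₗ
        (Coalgebra.comul (R := K) (A := H))
      = Algebra.linearMap K A ∘ₗ Coalgebra.counit := by
    rw [← hconv]; simp only [LinearMap.comp_assoc]
  rw [step3, ← ra.eq, map_sum]
  have step4 : ∀ i : ra.ι,
      ((Algebra.linearMap K A ∘ₗ Coalgebra.counit).lTensor H) (ra.left i ⊗ₜ[K] ra.right i)
        = (counit (R := K) (ra.right i) • ra.left i) ⊗ₜ[K] (1 : A) := by
    intro i
    simp [Algebra.algebraMap_eq_smul_one, TensorProduct.smul_tmul']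
  rw [Finset.sum_congr rfl fun i _ => step4 i, ← TensorProduct.sum_tmul,
    sum_counit_smul_right]


/-- `(S ⊗ S) ∘ Δ` is a left convolution inverse of `Δ` (cocommutative case). -/
lemma W9 (hc : ∀ h : H,
      (TensorProduct.comm K H H) (Coalgebra.comul h) = Coalgebra.comul (R := K) h) :
    LinearMap.mul' K (H ⊗[K] H) ∘ₗ
      TensorProduct.map
        ((TensorProduct.map (antipode (R := K)) (antipode (R := K))) ∘ₗ Coalgebra.comul)
        (Coalgebra.comul) ∘ₗ (Coalgebra.comul (R := K) (A := H))
    = Algebra.linearMap K (H ⊗[K] H) ∘ₗ Coalgebra.counit := by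
  set Δ := Coalgebra.comul (R := K) (A := H) with hΔ
  set S := antipode (R := K) (A := H) with hS
  set m := LinearMap.mul' K H with hm
  set ttcL := (tensorTensorTensorComm K H H H H).toLinearMap with httc
  have e7 : LinearMap.mul' K (H ⊗[K] H)
      = TensorProduct.map m m ∘ₗ ttcL := by
    ext x y z w
    simp [httc, hm, Algebra.TensorProduct.tmul_mul_tmul]
  have e8 : ttcL ∘ₗ TensorProduct.map (TensorProduct.map S S)
        (LinearMap.id : H ⊗[K] H →ₗ[K] H ⊗[K] H)
      = TensorProduct.map (TensorProduct.map S LinearMap.id) (TensorProduct.map S LinearMap.id)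
          ∘ₗ ttcL := by
    ext x y z w
    simp [httc]
  have hsplit : TensorProduct.map ((TensorProduct.map S S) ∘ₗ Δ) Δ
      = TensorProduct.map (TensorProduct.map S S) LinearMap.id ∘ₗ TensorProduct.map Δ Δ := by
    have := TensorProduct.map_comp (TensorProduct.map S S)
      (LinearMap.id : H ⊗[K] H →ₗ[K] H ⊗[K] H) Δ Δ
    rw [LinearMap.id_comp] at this
    exact this
  have hax : m ∘ₗ TensorProduct.map S LinearMap.id ∘ₗ Δ
      = Algebra.linearMap K H ∘ₗ Coalgebra.counit := by
    exact HopfAlgebra.mul_antipode_rTensor_comul (R := K)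
  have hfin : TensorProduct.map (Algebra.linearMap K H ∘ₗ Coalgebra.counit)
        (Algebra.linearMap K H ∘ₗ Coalgebra.counit) ∘ₗ Δ
      = Algebra.linearMap K (H ⊗[K] H) ∘ₗ Coalgebra.counit := by
    apply LinearMap.ext
    intro a
    obtain ⟨r⟩ : Nonempty (Repr K a) := ⟨Repr.arbitrary K a⟩
    simp only [LinearMap.comp_apply, hΔ]
    rw [← r.eq, map_sum]
    have : ∀ i : r.ι, TensorProduct.map (Algebra.linearMap K H ∘ₗ Coalgebra.counit)
        (Algebra.linearMap K H ∘ₗ Coalgebra.counit) (r.left i ⊗ₜ[K] r.right i)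
        = (counit (R := K) (r.left i) * counit (R := K) (r.right i)) •
            ((1 : H) ⊗ₜ[K] (1 : H)) := by
      intro i
      simp [Algebra.algebraMap_eq_smul_one, TensorProduct.smul_tmul', smul_smul,
        TensorProduct.tmul_smul, mul_comm]
    rw [Finset.sum_congr rfl fun i _ => this i, ← Finset.sum_smul, sum_counit_mul_counit]
    simp [Algebra.TensorProduct.one_def, Algebra.algebraMap_eq_smul_one]
  calc LinearMap.mul' K (H ⊗[K] H) ∘ₗ
        TensorProduct.map ((TensorProduct.map S S) ∘ₗ Δ) Δ ∘ₗ Δ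
      = (TensorProduct.map m m) ∘ₗ (ttcL ∘ₗ
          TensorProduct.map (TensorProduct.map S S) LinearMap.id) ∘ₗ
          TensorProduct.map Δ Δ ∘ₗ Δ := by
        rw [e7, hsplit]; simp only [LinearMap.comp_assoc]
    _ = (TensorProduct.map m m ∘ₗ
          TensorProduct.map (TensorProduct.map S LinearMap.id) (TensorProduct.map S LinearMap.id))
          ∘ₗ (ttcL ∘ₗ TensorProduct.map Δ Δ ∘ₗ Δ) := by
        rw [e8]; simp only [LinearMap.comp_assoc]
    _ = (TensorProduct.map m m ∘ₗ
          TensorProduct.map (TensorProduct.map S LinearMap.id) (TensorProduct.map S LinearMap.id))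
          ∘ₗ (TensorProduct.map Δ Δ ∘ₗ Δ) := by
        rw [W10 hc]
    _ = TensorProduct.map (m ∘ₗ TensorProduct.map S LinearMap.id ∘ₗ Δ)
          (m ∘ₗ TensorProduct.map S LinearMap.id ∘ₗ Δ) ∘ₗ Δ := by
        simp only [← LinearMap.comp_assoc]
        simp only [← TensorProduct.map_comp]
    _ = Algebra.linearMap K (H ⊗[K] H) ∘ₗ Coalgebra.counit := by
        rw [hax, hfin]


lemma antipode_mul' (a b : H) :
    antipode (R := K) (a * b) = antipode (R := K) b * antipode (R := K) a := by
  have hax : LinearMap.mul' K H ∘ₗ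
        TensorProduct.map (antipode (R := K)) (LinearMap.id) ∘ₗ Coalgebra.comul
      = Algebra.linearMap K H ∘ₗ Coalgebra.counit :=
    HopfAlgebra.mul_antipode_rTensor_comul
  obtain ⟨ra⟩ : Nonempty (Repr K a) := ⟨Repr.arbitrary K a⟩
  obtain ⟨rb⟩ : Nonempty (Repr K b) := ⟨Repr.arbitrary K b⟩
  set S : H →ₗ[K] H := antipode (R := K) (A := H) with hS
  set rra : ∀ i : ra.ι, Repr K (ra.right i) := fun i => Repr.arbitrary K (ra.right i) with hrra
  set rrb : ∀ j : rb.ι, Repr K (rb.right j) := fun j => Repr.arbitrary K (rb.right j) with hrrb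
  have E1 := W5gen (A := H) S LinearMap.id hax ra rra
  have E2 := W5gen (A := H) S LinearMap.id hax rb rrb
  simp only [LinearMap.id_apply] at E1 E2
  set F : H →ₗ[K] H →ₗ[K] H := LinearMap.mk₂ K
    (fun u z => ∑ j ∈ rb.index, ∑ l ∈ (rrb j).index,
      S (rb.left j) * u * ((rrb j).left l * S (z * (rrb j).right l)))
    (by intro u u' z; simp [add_mul, mul_add, Finset.sum_add_distrib])
    (by intro c u z; simp [Finset.smul_sum, smul_mul_assoc, mul_smul_comm])
    (by intro u z z'; simp [add_mul, map_add, mul_add, Finset.sum_add_distrib])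
    (by intro c u z; simp [Finset.smul_sum, smul_mul_assoc, map_smul, mul_smul_comm])
    with hF
  set G : H →ₗ[K] H →ₗ[K] H := LinearMap.mk₂ K
    (fun v w => v * S (a * w))
    (by intro v v' w; simp [add_mul])
    (by intro c v w; simp [smul_mul_assoc])
    (by intro v w w'; simp [mul_add, map_add])
    (by intro c v w; simp [mul_smul_comm, map_smul]) with hG
  -- step 1 : F 1 a = S (a * b)
  have h1 : F 1 a = S (a * b) := by
    have := congrArg (TensorProduct.lift G) E2
    rw [map_sum] at this
    simp only [map_sum, TensorProduct.lift.tmul] at this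
    simp only [hG, LinearMap.mk₂_apply, one_mul] at this
    simp only [hF, LinearMap.mk₂_apply]
    rw [← this]
    refine Finset.sum_congr rfl fun j _ => ?_
    refine Finset.sum_congr rfl fun l _ => ?_
    simp [mul_assoc]
  -- step 2 : lift F applied to E1
  have h3 : ∑ i ∈ ra.index, ∑ k ∈ (rra i).index,
      F (S (ra.left i) * (rra i).left k) ((rra i).right k) = F 1 a := by
    have := congrArg (TensorProduct.lift F) E1
    rw [map_sum] at this
    simp only [map_sum, TensorProduct.lift.tmul] at this
    exact this
  -- step 3 : the quadruple sum equals S b * S a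
  have h4 : ∑ i ∈ ra.index, ∑ k ∈ (rra i).index,
      F (S (ra.left i) * (rra i).left k) ((rra i).right k)
      = S b * S a := by
    have inner : ∀ (i : ra.ι) (j : rb.ι),
        ∑ k ∈ (rra i).index, ∑ l ∈ (rrb j).index,
          S (rb.left j) * (S (ra.left i) * (rra i).left k) *
            ((rrb j).left l * S ((rra i).right k * (rrb j).right l))
        = (counit (R := K) (ra.right i) * counit (R := K) (rb.right j)) •
            (S (rb.left j) * S (ra.left i)) := by
      intro i j
      have hR : ∑ p ∈ (rra i).index ×ˢ (rrb j).index,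
          ((rra i).left p.1 * (rrb j).left p.2) *
            antipode (R := K) ((rra i).right p.1 * (rrb j).right p.2)
          = counit (R := K) (ra.right i * rb.right j) • (1 : H) :=
        sum_mul_antipode_eq_smul (R := K) (Repr.mul (rra i) (rrb j))
      rw [Finset.sum_product] at hR
      calc ∑ k ∈ (rra i).index, ∑ l ∈ (rrb j).index,
            S (rb.left j) * (S (ra.left i) * (rra i).left k) *
              ((rrb j).left l * S ((rra i).right k * (rrb j).right l))
          = ∑ k ∈ (rra i).index, ∑ l ∈ (rrb j).index,
              (S (rb.left j) * S (ra.left i)) *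
                (((rra i).left k * (rrb j).left l) *
                  S ((rra i).right k * (rrb j).right l)) := by
            refine Finset.sum_congr rfl fun k _ => ?_
            refine Finset.sum_congr rfl fun l _ => ?_
            simp [mul_assoc]
        _ = (S (rb.left j) * S (ra.left i)) *
              (∑ k ∈ (rra i).index, ∑ l ∈ (rrb j).index,
                ((rra i).left k * (rrb j).left l) *
                  S ((rra i).right k * (rrb j).right l)) := by
            rw [Finset.mul_sum]
            refine Finset.sum_congr rfl fun k _ => ?_
            rw [Finset.mul_sum]
        _ = (S (rb.left j) * S (ra.left i)) *
              ((counit (R := K) (ra.right i * rb.right j)) • (1 : H)) := by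
            rw [hR]
        _ = (counit (R := K) (ra.right i) * counit (R := K) (rb.right j)) •
              (S (rb.left j) * S (ra.left i)) := by
            rw [Bialgebra.counit_mul]
            rw [mul_smul_comm, mul_one]
    calc ∑ i ∈ ra.index, ∑ k ∈ (rra i).index,
        F (S (ra.left i) * (rra i).left k) ((rra i).right k)
        = ∑ i ∈ ra.index, ∑ j ∈ rb.index,
            (counit (R := K) (ra.right i) * counit (R := K) (rb.right j)) •
              (S (rb.left j) * S (ra.left i)) := by
          refine Finset.sum_congr rfl fun i _ => ?_
          simp only [hF, LinearMap.mk₂_apply]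
          rw [Finset.sum_comm]
          refine Finset.sum_congr rfl fun j _ => ?_
          exact inner i j
      _ = S b * S a := by
          have hb : S b = ∑ j ∈ rb.index, counit (R := K) (rb.right j) • S (rb.left j) := by
            conv_lhs => rw [← sum_counit_smul_right (K := K) rb]
            rw [map_sum]
            simp
          have ha : S a = ∑ i ∈ ra.index, counit (R := K) (ra.right i) • S (ra.left i) := by
            conv_lhs => rw [← sum_counit_smul_right (K := K) ra]
            rw [map_sum]
            simp
          rw [hb, ha, Finset.sum_mul_sum, Finset.sum_comm]
          refine Finset.sum_congr rfl fun i _ => ?_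
          refine Finset.sum_congr rfl fun j _ => ?_
          rw [smul_mul_assoc, mul_smul_comm, smul_smul, mul_comm]
  rw [← h1, ← h3, h4]


lemma comul_antipode (hc : ∀ h : H,
      (TensorProduct.comm K H H) (Coalgebra.comul h) = Coalgebra.comul (R := K) h) (q : H) :
    Coalgebra.comul (R := K) (antipode (R := K) q)
      = TensorProduct.map (antipode (R := K)) (antipode (R := K)) (Coalgebra.comul q) := by
  set S : H →ₗ[K] H := antipode (R := K) (A := H) with hS
  obtain ⟨ra⟩ : Nonempty (Repr K q) := ⟨Repr.arbitrary K q⟩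
  set rr : ∀ i : ra.ι, Repr K (ra.right i) := fun i => Repr.arbitrary K (ra.right i) with hrr
  have E := W5gen (A := H ⊗[K] H) ((TensorProduct.map S S) ∘ₗ Coalgebra.comul)
    (Coalgebra.comul) (W9 hc) ra rr
  set G : (H ⊗[K] H) →ₗ[K] H →ₗ[K] (H ⊗[K] H) := LinearMap.mk₂ K
    (fun P z => P * Coalgebra.comul (R := K) (S z))
    (by intro P P' z; simp [add_mul])
    (by intro c P z; simp [smul_mul_assoc])
    (by intro P z z'; simp [map_add, mul_add])
    (by intro c P z; simp [map_smul, mul_smul_comm]) with hG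
  have happ := congrArg (TensorProduct.lift G) E
  rw [map_sum] at happ
  simp only [map_sum, TensorProduct.lift.tmul] at happ
  simp only [hG, LinearMap.mk₂_apply, one_mul, LinearMap.comp_apply] at happ
  rw [← happ]
  have inner : ∀ i : ra.ι,
      ∑ k ∈ (rr i).index,
        TensorProduct.map S S (Coalgebra.comul (ra.left i)) * Coalgebra.comul ((rr i).left k) *
          Coalgebra.comul (R := K) (S ((rr i).right k))
      = counit (R := K) (ra.right i) •
          TensorProduct.map S S (Coalgebra.comul (R := K) (ra.left i)) := by
    intro i
    calc ∑ k ∈ (rr i).index,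
          TensorProduct.map S S (Coalgebra.comul (ra.left i)) * Coalgebra.comul ((rr i).left k) *
            Coalgebra.comul (R := K) (S ((rr i).right k))
        = TensorProduct.map S S (Coalgebra.comul (ra.left i)) *
            Coalgebra.comul (R := K) (∑ k ∈ (rr i).index, (rr i).left k * S ((rr i).right k)) := by
          rw [map_sum, Finset.mul_sum]
          refine Finset.sum_congr rfl fun k _ => ?_
          rw [mul_assoc, Bialgebra.comul_mul]
      _ = counit (R := K) (ra.right i) •
            TensorProduct.map S S (Coalgebra.comul (R := K) (ra.left i)) := by
          rw [sum_mul_antipode_eq_smul (R := K) (rr i)]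
          rw [map_smul, Bialgebra.comul_one, mul_smul_comm, mul_one]
  rw [Finset.sum_congr rfl fun i _ => inner i]
  conv_rhs => rw [← sum_counit_smul_right (K := K) ra]
  rw [map_sum, map_sum]
  refine Finset.sum_congr rfl fun i _ => ?_
  rw [map_smul, map_smul]

lemma L1 (h k x : H) :
    adjointMap K H ((h * k) ⊗ₜ[K] x)
      = adjointMap K H (h ⊗ₜ[K] adjointMap K H (k ⊗ₜ[K] x)) := by
  obtain ⟨rh⟩ : Nonempty (Repr K h) := ⟨Repr.arbitrary K h⟩
  obtain ⟨rk⟩ : Nonempty (Repr K k) := ⟨Repr.arbitrary K k⟩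
  have lhs : adjointMap K H ((h * k) ⊗ₜ[K] x)
      = ∑ p ∈ rh.index ×ˢ rk.index,
          (rh.left p.1 * rk.left p.2) * x *
            antipode (R := K) (rh.right p.1 * rk.right p.2) :=
    adjointMap_tmul (h * k) x (Repr.mul rh rk)
  rw [lhs, Finset.sum_product]
  rw [adjointMap_tmul h _ rh, adjointMap_tmul k x rk]
  refine Finset.sum_congr rfl fun i _ => ?_
  rw [Finset.mul_sum, Finset.sum_mul]
  refine Finset.sum_congr rfl fun j _ => ?_
  rw [antipode_mul']
  simp [mul_assoc]


/-- `Repr` of `1`. -/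
noncomputable def reprOne : Repr K (1 : H) where
  ι := Unit
  index := Finset.univ
  left := fun _ => 1
  right := fun _ => 1
  eq := by simp [Bialgebra.comul_one, Algebra.TensorProduct.one_def]

lemma ad_one_left (x : H) : adjointMap K H ((1 : H) ⊗ₜ[K] x) = x := by
  rw [adjointMap_tmul _ _ (reprOne (K := K) (H := H))]
  simp [reprOne]

lemma ad_one_right (a : H) :
    adjointMap K H (a ⊗ₜ[K] (1 : H)) = counit (R := K) a • (1 : H) := by
  obtain ⟨r⟩ : Nonempty (Repr K a) := ⟨Repr.arbitrary K a⟩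
  rw [adjointMap_tmul _ _ r]
  simp only [mul_one]
  exact sum_mul_antipode_eq_smul (R := K) r

end Gen

section Conj
variable (K : Type*) [CommRing K] (H : Type*) [Ring H] [HopfAlgebra K H]
open Coalgebra HopfAlgebra LinearMap

/-- The conjugation pattern on the tensor square. -/
noncomputable def conj2 :
    ((H ⊗[K] H) ⊗[K] (H ⊗[K] H)) ⊗[K] (H ⊗[K] H) →ₗ[K] H ⊗[K] H :=
  (LinearMap.mul' K (H ⊗[K] H)) ∘ₗ
  (TensorProduct.map LinearMap.id (LinearMap.mul' K (H ⊗[K] H))) ∘ₗ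
  (TensorProduct.map LinearMap.id (TensorProduct.map LinearMap.id
    (TensorProduct.map (antipode (R := K)) (antipode (R := K))))) ∘ₗ
  (TensorProduct.map LinearMap.id
    (TensorProduct.comm K (H ⊗[K] H) (H ⊗[K] H)).toLinearMap) ∘ₗ
  (TensorProduct.assoc K (H ⊗[K] H) (H ⊗[K] H) (H ⊗[K] H)).toLinearMap

@[simp] lemma conj2_tmul (P Q Y : H ⊗[K] H) :
    conj2 K H ((P ⊗ₜ[K] Q) ⊗ₜ[K] Y)
      = P * Y * (TensorProduct.map (antipode (R := K)) (antipode (R := K)) Q) := by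
  simp [conj2, mul_assoc]

variable {K H}

lemma B1 (hc : ∀ h : H,
      (TensorProduct.comm K H H) (Coalgebra.comul h) = Coalgebra.comul (R := K) h) :
    (Coalgebra.comul (R := K) (A := H)) ∘ₗ ad2
      = conj2 K H ∘ₗ TensorProduct.map
          (TensorProduct.map (Coalgebra.comul) (Coalgebra.comul)) (Coalgebra.comul) := by
  apply TensorProduct.ext_threefold
  intro p q y
  simp only [LinearMap.comp_apply, ad2_tmul, TensorProduct.map_tmul, conj2_tmul]
  rw [Bialgebra.comul_mul, Bialgebra.comul_mul, comul_antipode hc]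

lemma B2 : conj2 K H
    = TensorProduct.map ad2 ad2 ∘ₗ
        (tensorTensorTensorComm K (H ⊗[K] H) (H ⊗[K] H) H H).toLinearMap ∘ₗ
        TensorProduct.map (tensorTensorTensorComm K H H H H).toLinearMap LinearMap.id := by
  apply TensorProduct.ext_threefold
  intro x y z
  induction x using TensorProduct.induction_on with
  | zero => simp only [TensorProduct.zero_tmul, LinearMap.map_zero]
  | tmul p q =>
    induction y using TensorProduct.induction_on with
    | zero => simp only [TensorProduct.zero_tmul, TensorProduct.tmul_zero, LinearMap.map_zero]
    | tmul r s =>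
      induction z using TensorProduct.induction_on with
      | zero => simp only [TensorProduct.tmul_zero, LinearMap.map_zero]
      | tmul u v => simp [Algebra.TensorProduct.tmul_mul_tmul]
      | add z1 z2 h1 h2 => simp only [TensorProduct.tmul_add, map_add, h1, h2]
    | add y1 y2 h1 h2 =>
        simp only [TensorProduct.add_tmul, TensorProduct.tmul_add, map_add, h1, h2]
  | add x1 x2 h1 h2 =>
      simp only [TensorProduct.add_tmul, map_add, h1, h2]

lemma E9 : TensorProduct.map (adjointMap K H) (adjointMap K H) ∘ₗ
      (tensorTensorTensorComm K H H H H).toLinearMap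
    = TensorProduct.map ad2 ad2 ∘ₗ
        (tensorTensorTensorComm K (H ⊗[K] H) (H ⊗[K] H) H H).toLinearMap ∘ₗ
        TensorProduct.map
          (TensorProduct.map (Coalgebra.comul) (Coalgebra.comul)) LinearMap.id := by
  apply TensorProduct.ext_fourfold'
  intro u v y z
  simp only [LinearMap.comp_apply, LinearEquiv.coe_coe, tensorTensorTensorComm_tmul,
    TensorProduct.map_tmul, LinearMap.id_apply]
  rw [adjointMap_eq]
  simp

lemma main_comul_mul (hc : ∀ h : H,
      (TensorProduct.comm K H H) (Coalgebra.comul h) = Coalgebra.comul (R := K) h) :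
    (Coalgebra.comul (R := K) (A := H)) ∘ₗ adjointMap K H
      = TensorProduct.map (adjointMap K H) (adjointMap K H) ∘ₗ
          comul2 K H (Coalgebra.comul (R := K) (A := H)) := by
  apply TensorProduct.ext'
  intro a x
  set Δ := Coalgebra.comul (R := K) (A := H) with hΔ
  have hW10 := LinearMap.congr_fun (W10 hc) a
  simp only [LinearMap.comp_apply] at hW10
  have lhs_eq : Δ (adjointMap K H (a ⊗ₜ[K] x))
      = conj2 K H ((TensorProduct.map Δ Δ (Δ a)) ⊗ₜ[K] Δ x) := by
    rw [adjointMap_eq]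
    have hb1 := LinearMap.congr_fun (B1 hc) ((Δ a) ⊗ₜ[K] x)
    simp only [LinearMap.comp_apply, TensorProduct.map_tmul] at hb1 ⊢
    simpa using hb1
  have rhs_eq : (TensorProduct.map (adjointMap K H) (adjointMap K H))
        (comul2 K H (Coalgebra.comul (R := K) (A := H)) (a ⊗ₜ[K] x))
      = TensorProduct.map ad2 ad2
          ((tensorTensorTensorComm K (H ⊗[K] H) (H ⊗[K] H) H H)
            ((TensorProduct.map Δ Δ (Δ a)) ⊗ₜ[K] Δ x)) := by
    have he9 := LinearMap.congr_fun E9 ((Δ a) ⊗ₜ[K] (Δ x))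
    simp only [LinearMap.comp_apply, TensorProduct.map_tmul, LinearMap.id_apply] at he9
    simp only [comul2, LinearMap.comp_apply, TensorProduct.map_tmul]
    exact he9
  simp only [LinearMap.comp_apply]
  rw [lhs_eq, rhs_eq]
  have hb2 := LinearMap.congr_fun B2 ((TensorProduct.map Δ Δ (Δ a)) ⊗ₜ[K] Δ x)
  simp only [LinearMap.comp_apply, TensorProduct.map_tmul, LinearMap.id_apply] at hb2
  rw [hb2, hW10]
  rfl

end Conj

section Final
variable {K : Type*} [CommRing K] {H : Type*} [Ring H] [HopfAlgebra K H]
open Coalgebra HopfAlgebra LinearMap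

lemma main_counit_mul :
    (Coalgebra.counit (R := K) (A := H)) ∘ₗ adjointMap K H
      = counit2 K H (Coalgebra.counit (R := K) (A := H)) := by
  apply TensorProduct.ext'
  intro a x
  obtain ⟨r⟩ : Nonempty (Repr K a) := ⟨Repr.arbitrary K a⟩
  simp only [LinearMap.comp_apply, counit2, TensorProduct.map_tmul, LinearMap.mul'_apply]
  rw [adjointMap_tmul a x r, map_sum]
  calc ∑ i ∈ r.index, counit (R := K) (r.left i * x * antipode (R := K) (r.right i))
      = ∑ i ∈ r.index, (counit (R := K) (r.left i) * counit (R := K) (r.right i)) *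
          counit (R := K) x := by
        refine Finset.sum_congr rfl fun i _ => ?_
        rw [Bialgebra.counit_mul, Bialgebra.counit_mul, counit_antipode]
        ring
    _ = counit (R := K) a * counit (R := K) x := by
        rw [← Finset.sum_mul, sum_counit_mul_counit]

lemma main_self_distrib :
    adjointMap K H ∘ₗ TensorProduct.map LinearMap.id (adjointMap K H)
      = adjointMap K H ∘ₗ TensorProduct.map (adjointMap K H) (adjointMap K H) ∘ₗ
          (tensorTensorTensorComm K H H H H).toLinearMap ∘ₗ
          TensorProduct.map (Coalgebra.comul) LinearMap.id := by
  have hax : LinearMap.mul' K H ∘ₗ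
        TensorProduct.map (antipode (R := K)) (LinearMap.id) ∘ₗ Coalgebra.comul
      = Algebra.linearMap K H ∘ₗ Coalgebra.counit :=
    HopfAlgebra.mul_antipode_rTensor_comul
  apply TensorProduct.ext'
  intro a t
  induction t using TensorProduct.induction_on with
  | zero => simp only [TensorProduct.tmul_zero, LinearMap.map_zero]
  | add u v hu hv => simp only [TensorProduct.tmul_add, LinearMap.map_add, hu, hv]
  | tmul b c =>
    obtain ⟨ra⟩ : Nonempty (Repr K a) := ⟨Repr.arbitrary K a⟩
    set rl : ∀ i : ra.ι, Repr K (ra.left i) := fun i => Repr.arbitrary K (ra.left i) with hrl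
    have E := W7gen (A := H) (antipode (R := K)) LinearMap.id hax ra rl
    simp only [LinearMap.id_apply] at E
    set G : H →ₗ[K] H →ₗ[K] H := LinearMap.mk₂ K
      (fun u v => adjointMap K H (u ⊗ₜ[K]
        adjointMap K H (b ⊗ₜ[K] adjointMap K H (v ⊗ₜ[K] c))))
      (by intro u u' v; simp [TensorProduct.add_tmul])
      (by intro k u v; simp [TensorProduct.smul_tmul, TensorProduct.tmul_smul])
      (by intro u v v'; simp [TensorProduct.add_tmul, TensorProduct.tmul_add])
      (by intro k u v; simp [TensorProduct.smul_tmul, TensorProduct.tmul_smul])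
      with hG
    have happ := congrArg (TensorProduct.lift G) E
    rw [map_sum] at happ
    simp only [map_sum, TensorProduct.lift.tmul] at happ
    simp only [hG, LinearMap.mk₂_apply] at happ
    -- RHS of the goal
    simp only [LinearMap.comp_apply, TensorProduct.map_tmul, LinearMap.id_apply]
    rw [← ra.eq, TensorProduct.sum_tmul, map_sum, map_sum, map_sum]
    calc adjointMap K H (a ⊗ₜ[K] adjointMap K H (b ⊗ₜ[K] c))
        = ∑ i ∈ ra.index, ∑ k ∈ (rl i).index,
            adjointMap K H ((rl i).left k ⊗ₜ[K] adjointMap K H (b ⊗ₜ[K]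
              adjointMap K H ((antipode (R := K) ((rl i).right k) * ra.right i) ⊗ₜ[K] c))) := by
          rw [ad_one_left] at happ
          exact happ.symm
      _ = ∑ i ∈ ra.index, adjointMap K H
            ((TensorProduct.map (adjointMap K H) (adjointMap K H))
              ((tensorTensorTensorComm K H H H H)
                ((ra.left i ⊗ₜ[K] ra.right i) ⊗ₜ[K] (b ⊗ₜ[K] c)))) := by
          refine Finset.sum_congr rfl fun i _ => ?_
          simp only [tensorTensorTensorComm_tmul, TensorProduct.map_tmul]
          rw [adjointMap_tmul (ra.left i) b (rl i), TensorProduct.sum_tmul, map_sum]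
          refine Finset.sum_congr rfl fun k _ => ?_
          rw [mul_assoc,
            L1 ((rl i).left k) (b * antipode (R := K) ((rl i).right k))
              (adjointMap K H (ra.right i ⊗ₜ[K] c)),
            L1 b (antipode (R := K) ((rl i).right k))
              (adjointMap K H (ra.right i ⊗ₜ[K] c)),
            ← L1 (antipode (R := K) ((rl i).right k)) (ra.right i) c]

end Final


/-- Let `H` be a cocommutative Hopf algebra over a commutative ring `K`
containing the rationals, and define `h ▹ h' := ad_h(h') = Σ h⁽¹⁾ h' S(h⁽²⁾)`.  Then
`(H, Δ, ε, 1, ▹)` is a rack bialgebra: `▹` is a morphism of C³-coalgebras `H ⊗ H → H`, and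
for all `h, h', h'' ∈ H` one has `1 ▹ h = h`, `h ▹ 1 = ε(h) 1`, and
`h ▹ (h' ▹ h'') = Σ (h⁽¹⁾ ▹ h') ▹ (h⁽²⁾ ▹ h'')`. -/
theorem hopf_adjoint_is_rack_bialgebra
    (K : Type*) [CommRing K] [Algebra ℚ K]
    (H : Type*) [Ring H] [HopfAlgebra K H]
    (cocomm : ∀ h : H,
      (TensorProduct.comm K H H) (Coalgebra.comul h) = Coalgebra.comul (R := K) h) :
    IsRackBialgebra K H (Coalgebra.comul) (Coalgebra.counit) (1 : H) (adjointMap K H) := by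
  refine ⟨⟨?_, ?_, ?_, ?_, ?_⟩, ?_, ?_, ?_, ?_, ?_⟩
  · exact Coalgebra.coassoc
  · apply LinearMap.ext
    intro a
    have h : (TensorProduct.map (Coalgebra.counit (R := K)) (LinearMap.id : H →ₗ[K] H))
        (Coalgebra.comul a) = (1 : K) ⊗ₜ[K] a := Coalgebra.rTensor_counit_comul a
    simp only [LinearMap.comp_apply, LinearMap.id_apply]
    rw [h]
    simp
  · apply LinearMap.ext
    intro a
    have h : (TensorProduct.map (LinearMap.id : H →ₗ[K] H) (Coalgebra.counit (R := K)))
        (Coalgebra.comul a) = a ⊗ₜ[K] (1 : K) := Coalgebra.lTensor_counit_comul a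
    simp only [LinearMap.comp_apply, LinearMap.id_apply]
    rw [h]
    simp
  · rw [Bialgebra.comul_one, Algebra.TensorProduct.one_def]
  · exact Bialgebra.counit_one
  · exact main_comul_mul cocomm
  · exact main_counit_mul
  · exact ad_one_left
  · exact ad_one_right
  · exact main_self_distrib


end RackPaper
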